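/- Let C be a nonempty closed convex subset of a Hilbert space H and x₁ ∈ H. If {Cₙ} is a decreasing sequence of nonempty closed convex sets (Cₙ₊₁ ⊆ Cₙ ⊆ C) containing a nonempty set F, and xₙ = P_{Cₙ}x₁, then the sequence {‖xₙ - x₁‖} is nondecreasing and bounded above by ‖p - x₁‖ for every p ∈ F, hence convergent, and moreover ‖xₙ₊₁ - xₙ‖² ≤ ‖xₙ₊₁ - x₁‖² - ‖xₙ - x₁‖², so ‖xₙ₊₁ - xₙ‖ → 0. -/

import Mathlib

open Filter

theorem shrinking_projection_basic_estimates
    (H : Type*) [NormedAddCommGroup H] [InnerProductSpace ℝ H] [CompleteSpace H]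
    (C : Set H) (hC : C.Nonempty) (hCcl : IsClosed C) (hCcv : Convex ℝ C)
    (Cs : ℕ → Set H)
    (hCs : ∀ n, (Cs n).Nonempty ∧ IsClosed (Cs n) ∧ Convex ℝ (Cs n))
    (hCsC : ∀ n, Cs n ⊆ C) (hnest : ∀ n, Cs (n + 1) ⊆ Cs n)
    (F : Set H) (hF : F.Nonempty) (hFCs : ∀ n, F ⊆ Cs n)
    (x₁ : H) (x : ℕ → H)
    (hxmem : ∀ n, x n ∈ Cs n)
    (hxmin : ∀ n, ∀ y ∈ Cs n, ‖x₁ - x n‖ ≤ ‖x₁ - y‖) :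
    (Monotone fun n => ‖x n - x₁‖)
      ∧ (∀ p ∈ F, ∀ n, ‖x n - x₁‖ ≤ ‖p - x₁‖)
      ∧ (∃ l : ℝ, Tendsto (fun n => ‖x n - x₁‖) atTop (nhds l))
      ∧ (∀ n, ‖x (n + 1) - x n‖ ^ 2 ≤ ‖x (n + 1) - x₁‖ ^ 2 - ‖x n - x₁‖ ^ 2)
      ∧ Tendsto (fun n => ‖x (n + 1) - x n‖) atTop (nhds 0) := by
  obtain ⟨p₀, hp₀⟩ := hF
  have hmono : Monotone fun n => ‖x n - x₁‖ := by
    apply monotone_nat_of_le_succ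
    intro n
    have := hxmin n (x (n + 1)) (hnest n (hxmem (n + 1)))
    simpa [norm_sub_rev] using this
  have hbound : ∀ p ∈ F, ∀ n, ‖x n - x₁‖ ≤ ‖p - x₁‖ := by
    intro p hp n
    have := hxmin n p (hFCs n hp)
    simpa [norm_sub_rev] using this
  have hbdd : BddAbove (Set.range fun n => ‖x n - x₁‖) :=
    ⟨‖p₀ - x₁‖, by rintro _ ⟨n, rfl⟩; exact hbound p₀ hp₀ n⟩
  have hconv : Tendsto (fun n => ‖x n - x₁‖) atTop (nhds (⨆ n, ‖x n - x₁‖)) :=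
    tendsto_atTop_ciSup hmono hbdd
  have hvar : ∀ n, ∀ w ∈ Cs n, inner ℝ (x₁ - x n) (w - x n) ≤ (0 : ℝ) := by
    intro n
    have hne : (Cs n).Nonempty := (hCs n).1
    haveI : Nonempty (Cs n) := hne.to_subtype
    have heq : ‖x₁ - x n‖ = ⨅ w : Cs n, ‖x₁ - w‖ := by
      apply le_antisymm
      · exact le_ciInf fun w => hxmin n w w.2
      · exact ciInf_le ⟨0, by rintro _ ⟨w, rfl⟩; positivity⟩ (⟨x n, hxmem n⟩ : Cs n)
    exact (norm_eq_iInf_iff_real_inner_le_zero (hCs n).2.2 (hxmem n)).1 heq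
  have hkey : ∀ n, ‖x (n + 1) - x n‖ ^ 2 ≤ ‖x (n + 1) - x₁‖ ^ 2 - ‖x n - x₁‖ ^ 2 := by
    intro n
    have h := hvar n (x (n + 1)) (hnest n (hxmem (n + 1)))
    have e : ‖x (n + 1) - x n‖ ^ 2 = ‖x (n + 1) - x₁‖ ^ 2 - ‖x n - x₁‖ ^ 2
        + 2 * inner ℝ (x₁ - x n) (x (n + 1) - x n) := by
      simp only [← @real_inner_self_eq_norm_sq, inner_sub_left, inner_sub_right]
      rw [real_inner_comm (x n) (x (n + 1)), real_inner_comm x₁ (x (n + 1)),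
        real_inner_comm x₁ (x n)]
      ring
    linarith
  have hsq : Tendsto (fun n => ‖x (n + 1) - x n‖ ^ 2) atTop (nhds 0) := by
    have ha : Tendsto (fun n => ‖x n - x₁‖ ^ 2) atTop (nhds ((⨆ n, ‖x n - x₁‖) ^ 2)) :=
      hconv.pow 2
    have ha' : Tendsto (fun n => ‖x (n + 1) - x₁‖ ^ 2) atTop
        (nhds ((⨆ n, ‖x n - x₁‖) ^ 2)) :=
      ha.comp (tendsto_add_atTop_nat 1)
    have hd : Tendsto (fun n => ‖x (n + 1) - x₁‖ ^ 2 - ‖x n - x₁‖ ^ 2) atTop (nhds 0) := by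
      simpa using ha'.sub ha
    exact squeeze_zero (fun n => by positivity) hkey hd
  have hzero : Tendsto (fun n => ‖x (n + 1) - x n‖) atTop (nhds 0) := by
    have h2 : (fun n => ‖x (n + 1) - x n‖)
        = fun n => Real.sqrt (‖x (n + 1) - x n‖ ^ 2) :=
      funext fun n => (Real.sqrt_sq (norm_nonneg _)).symm
    rw [h2]
    have := (Real.continuous_sqrt.tendsto 0).comp hsq
    simpa [Function.comp_def] using this
  exact ⟨hmono, hbound, ⟨_, hconv⟩, hkey, hzero⟩
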